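/- For any r ∈ k, a letter a, and a word w in a quasi-shuffle algebra, Σ^r(aw) = a·Σ^r(w) + r·(a⋄Σ^r(w)), where a⋄u denotes ⋄-multiplying a into the first letter of u (extended linearly, with a⋄1 = 0). -/

import Mathlib

/-!
Quasi-shuffle algebras (Hoffman–Ihara).  We model the span `kA` of the alphabet
(with its commutative associative product `⋄`, written `*` in `L`) as a
non-unital commutative `k`-algebra `L`, and the word algebra `k⟨A⟩` as the
tensor algebra `TensorAlgebra k L`, in which a word `a₁⋯aₙ` is the product
`ι a₁ * ⋯ * ι aₙ`.
-/

open TensorAlgebra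

variable (k : Type*) [Field k]
variable {L : Type*} [NonUnitalCommRing L] [Module k L]
  [SMulCommClass k L L] [IsScalarTower k L L]

/-- The word `a₁⋯aₙ` as an element of the tensor algebra. -/
def word (l : List L) : TensorAlgebra k L := (l.map fun a => TensorAlgebra.ι k a).prod

/-- The `⋄`-product of the letters of a nonempty block (junk value `0` on `[]`). -/
def blockProd : List L → L
  | [] => 0
  | a :: t => t.foldl (· * ·) a

/-- The Hoffman–Ihara operator `Ψ_f` on words, for `f = c₁t + c₂t² + ⋯`:
`Ψ_f(w) = Σ_{(i₁,…,i_m) composition of ℓ(w)} c_{i₁}⋯c_{i_m} I[w]`,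
written via the recursion on the first block. -/
def psi (c : ℕ → k) : List L → TensorAlgebra k L
  | [] => 1
  | a :: w => ∑ j ∈ Finset.range (w.length + 1),
      c (j + 1) • (TensorAlgebra.ι k (blockProd (a :: w.take j)) * psi c (w.drop j))
  termination_by l => l.length
  decreasing_by simp [List.length_drop] <;> omega

lemma word_cons (a : L) (u : List L) :
    word k (a :: u) = TensorAlgebra.ι k a * word k u := by
  simp [word]

lemma mul_foldl (a : L) : ∀ (s : List L) (b : L),
    a * s.foldl (· * ·) b = s.foldl (· * ·) (a * b) := by
  intro s
  induction s with
  | nil => intro b; rfl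
  | cons x t ih => intro b; simpa [mul_assoc] using ih (b * x)

lemma blockProd_cons_cons (a b : L) (s : List L) :
    blockProd (a :: b :: s) = blockProd ((a * b) :: s) := rfl

lemma mul_blockProd (a b : L) (s : List L) :
    a * blockProd (b :: s) = blockProd ((a * b) :: s) := by
  simp [blockProd, mul_foldl]

lemma psi_mem_span (c : ℕ → k) :
    ∀ (u : List L), psi k c u ∈ Submodule.span k (Set.range (word k (L := L))) := by
  have key : ∀ n (u : List L), u.length ≤ n →
      psi k c u ∈ Submodule.span k (Set.range (word k (L := L))) := by
    intro n
    induction n with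
    | zero =>
      intro u hu
      rw [List.length_eq_zero_iff.mp (Nat.le_zero.mp hu)]
      rw [psi]
      exact Submodule.subset_span ⟨[], by simp [word]⟩
    | succ n ih =>
      intro u hu
      match u with
      | [] =>
        rw [psi]; exact Submodule.subset_span ⟨[], by simp [word]⟩
      | a :: w =>
        rw [psi]
        refine Submodule.sum_mem _ fun j hj => Submodule.smul_mem _ _ ?_
        have hmem := ih (w.drop j) (by simp at hu ⊢; omega)
        -- multiplying a span element by ι of a letter stays in the span
        refine Submodule.span_induction (p := fun x _ =>
            TensorAlgebra.ι k (blockProd (a :: w.take j)) * x ∈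
              Submodule.span k (Set.range (word k (L := L)))) ?_ ?_ ?_ ?_ hmem
        · rintro x ⟨v, rfl⟩
          exact Submodule.subset_span ⟨_ :: v, (word_cons k _ v).symm⟩
        · simp
        · intro x y _ _ hx hy
          rw [mul_add]; exact Submodule.add_mem _ hx hy
        · intro t x _ hx
          rw [mul_smul_comm]; exact Submodule.smul_mem _ _ hx
  exact fun u => key u.length u le_rfl

lemma D_mul (D : L → TensorAlgebra k L →ₗ[k] TensorAlgebra k L)
    (hDw : ∀ (a c : L) (u : List L),
      D a (TensorAlgebra.ι k c * word k u) = TensorAlgebra.ι k (a * c) * word k u)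
    (a c : L) {x : TensorAlgebra k L}
    (hx : x ∈ Submodule.span k (Set.range (word k (L := L)))) :
    D a (TensorAlgebra.ι k c * x) = TensorAlgebra.ι k (a * c) * x := by
  refine Submodule.span_induction (p := fun x _ =>
      D a (TensorAlgebra.ι k c * x) = TensorAlgebra.ι k (a * c) * x) ?_ ?_ ?_ ?_ hx
  · rintro x ⟨v, rfl⟩; exact hDw a c v
  · simp
  · intro x y _ _ hx hy
    rw [mul_add, map_add, hx, hy, mul_add]
  · intro t x _ hx
    rw [mul_smul_comm, map_smul, hx, mul_smul_comm]

/--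
For `r ∈ k`, a letter `a` and a word `w`,
`Σ^r(aw) = a·Σ^r(w) + r·(a ⋄ Σ^r(w))`, where `D a = a ⋄ -` is the
first-letter `⋄`-action (with `a ⋄ 1 = 0`).
-/
theorem stmt7 (r : k)
    (Sr : TensorAlgebra k L →ₗ[k] TensorAlgebra k L)
    (hSr : ∀ w : List L, Sr (word k w) = psi k (fun n => r ^ (n - 1)) w)
    (D : L → TensorAlgebra k L →ₗ[k] TensorAlgebra k L)
    (hD1 : ∀ a : L, D a 1 = 0)
    (hDw : ∀ (a c : L) (u : List L),
      D a (TensorAlgebra.ι k c * word k u) = TensorAlgebra.ι k (a * c) * word k u) :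
    ∀ (a : L) (w : List L),
      Sr (word k (a :: w)) = TensorAlgebra.ι k a * Sr (word k w) + r • D a (Sr (word k w)) := by
  intro a w
  set c : ℕ → k := fun n => r ^ (n - 1) with hc
  rw [hSr, hSr]
  match w with
  | [] =>
    have h0 : psi k (fun n => r ^ (n - 1)) ([] : List L) = 1 := by rw [psi]
    rw [psi, psi]
    simp [blockProd, hD1, hc, h0]
  | b :: v =>
    rw [psi]
    rw [Finset.sum_range_succ']
    have hj0 : c (0 + 1) • (TensorAlgebra.ι k (blockProd (a :: (b :: v).take 0)) *
        psi k c ((b :: v).drop 0)) = TensorAlgebra.ι k a * psi k c (b :: v) := by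
      simp [blockProd, hc]
    rw [hj0]
    rw [add_comm]
    congr 1
    -- RHS: r • D a (psi (b::v))
    conv_rhs => rw [psi]
    rw [map_sum, Finset.smul_sum]
    refine Finset.sum_congr rfl fun j hj => ?_
    rw [map_smul, smul_comm]
    rw [D_mul k D hDw a _ (psi_mem_span k c (v.drop j))]
    rw [smul_smul]
    have h1 : (b :: v).take (j + 1) = b :: v.take j := rfl
    have h2 : (b :: v).drop (j + 1) = v.drop j := rfl
    rw [h1, h2, blockProd_cons_cons, ← mul_blockProd]
    congr 1
    simp [hc, pow_succ, mul_comm]
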